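/- Let (G_N)_{N≥1} be a sequence of finite simple graphs, where G_N has N vertices. For ε > 0 define dis_2(G_N, ε) := max{ com(U) : U ⊆ V_N, |U| ≥ ε·√N }. If dis_2(G_N, ε)/√N → 0 as N → ∞ for every ε > 0, then |E(G_N)|/N^{3/2} → ∞ as N → ∞, i.e., the total number of edges of G_N is ω(N·√N). -/

import Mathlib

open Filter

/-- `com(U)`: the number of vertices of `G` lying outside the closed
neighborhood `N[U]` of `U`. -/
def com {V : Type*} [Fintype V] [DecidableEq V]
    (G : SimpleGraph V) [DecidableRel G.Adj] (U : Finset V) : ℕ :=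
  (Finset.univ.filter (fun v => v ∉ U ∧ ∀ u ∈ U, ¬ G.Adj u v)).card

open scoped Classical in
/-- `dis₂(G, ε) = max { com(U) : U ⊆ V, |U| ≥ ε·√N }` for a graph `G` on `N`
vertices. -/
noncomputable def dis2 {N : ℕ} (G : SimpleGraph (Fin N)) [DecidableRel G.Adj]
    (ε : ℝ) : ℕ :=
  Finset.sup
    (Finset.univ.filter (fun U : Finset (Fin N) => ε * Real.sqrt N ≤ (U.card : ℝ)))
    (com G)

/-- Every vertex is either outside the closed neighborhood of `U`, or inside
`U ∪ ⋃_{u ∈ U} N(u)`; hence `|V| ≤ com(U) + ∑_{u∈U} (deg u + 1)`. -/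
lemma card_le_com_add_sum {V : Type*} [Fintype V] [DecidableEq V]
    (G : SimpleGraph V) [DecidableRel G.Adj] (U : Finset V) :
    Fintype.card V ≤ com G U + ∑ u ∈ U, (G.degree u + 1) := by
  classical
  have hsub : (Finset.univ : Finset V) ⊆
      (Finset.univ.filter (fun v => v ∉ U ∧ ∀ u ∈ U, ¬ G.Adj u v))
        ∪ (U ∪ U.biUnion (fun u => G.neighborFinset u)) := by
    intro v _
    simp only [Finset.mem_union, Finset.mem_filter, Finset.mem_univ, true_and,
      Finset.mem_biUnion, SimpleGraph.mem_neighborFinset]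
    by_cases hv : v ∈ U
    · tauto
    by_cases ha : ∀ u ∈ U, ¬ G.Adj u v
    · tauto
    · push_neg at ha
      obtain ⟨u, hu, hadj⟩ := ha
      exact Or.inr (Or.inr ⟨u, hu, hadj⟩)
  have h1 : Fintype.card V ≤
      com G U + (U ∪ U.biUnion (fun u => G.neighborFinset u)).card := by
    calc Fintype.card V = (Finset.univ : Finset V).card := (Finset.card_univ).symm
      _ ≤ _ := Finset.card_le_card hsub
      _ ≤ _ := Finset.card_union_le _ _
  have h2 : (U ∪ U.biUnion (fun u => G.neighborFinset u)).card ≤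
      U.card + ∑ u ∈ U, G.degree u := by
    calc (U ∪ U.biUnion (fun u => G.neighborFinset u)).card
        ≤ U.card + (U.biUnion (fun u => G.neighborFinset u)).card :=
          Finset.card_union_le _ _
      _ ≤ U.card + ∑ u ∈ U, (G.neighborFinset u).card :=
          Nat.add_le_add_left (Finset.card_biUnion_le) _
      _ = U.card + ∑ u ∈ U, G.degree u := by
          simp [SimpleGraph.card_neighborFinset_eq_degree]
  have h3 : U.card + ∑ u ∈ U, G.degree u = ∑ u ∈ U, (G.degree u + 1) := by
    rw [Finset.sum_add_distrib]
    simp [add_comm]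
  omega

/-- `com(U) ≤ dis₂(G, ε)` whenever `|U| ≥ ε√N`. -/
lemma com_le_dis2 {N : ℕ} (G : SimpleGraph (Fin N)) [DecidableRel G.Adj]
    {ε : ℝ} {U : Finset (Fin N)} (hU : ε * Real.sqrt N ≤ (U.card : ℝ)) :
    com G U ≤ dis2 G ε := by
  classical
  apply Finset.le_sup
  simp only [Finset.mem_filter, Finset.mem_univ, true_and]
  exact hU

/-- Degree-counting core: if `m·t + dis₂(G,ε) < N` and `m ≥ ε√N`, then all but
fewer than `m` vertices have degree `≥ t`, whence `(N-m)·t ≤ 2|E|`. -/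
lemma key_count {N : ℕ} (G : SimpleGraph (Fin N)) [DecidableRel G.Adj]
    {ε : ℝ} {m t : ℕ} (hm : ε * Real.sqrt N ≤ (m : ℝ))
    (hmt : m * t + dis2 G ε < N) :
    (N - m) * t ≤ 2 * G.edgeFinset.card := by
  classical
  set B : Finset (Fin N) := Finset.univ.filter (fun v => G.degree v + 1 ≤ t) with hB
  have hBcard : B.card < m := by
    by_contra hc
    push_neg at hc
    obtain ⟨U, hUB, hUcard⟩ := Finset.exists_subset_card_eq hc
    have hUc : ε * Real.sqrt N ≤ (U.card : ℝ) := by rw [hUcard]; exact hm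
    have h1 : Fintype.card (Fin N) ≤ com G U + ∑ u ∈ U, (G.degree u + 1) :=
      card_le_com_add_sum G U
    have h2 : ∑ u ∈ U, (G.degree u + 1) ≤ m * t := by
      calc ∑ u ∈ U, (G.degree u + 1) ≤ ∑ _u ∈ U, t := by
            apply Finset.sum_le_sum
            intro u hu
            have := hUB hu
            rw [hB, Finset.mem_filter] at this
            exact this.2
        _ = m * t := by rw [Finset.sum_const, hUcard, smul_eq_mul]
    have h3 : com G U ≤ dis2 G ε := com_le_dis2 G hUc
    rw [Fintype.card_fin] at h1
    omega
  have hsum : (N - B.card) * t ≤ ∑ v, G.degree v := by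
    have hcompl : ∀ v ∈ Bᶜ, t ≤ G.degree v := by
      intro v hv
      rw [Finset.mem_compl, hB, Finset.mem_filter] at hv
      push_neg at hv
      have := hv (Finset.mem_univ v)
      omega
    calc (N - B.card) * t = Bᶜ.card * t := by
          rw [Finset.card_compl, Fintype.card_fin]
      _ ≤ ∑ v ∈ Bᶜ, G.degree v := by
          have := Finset.card_nsmul_le_sum Bᶜ (fun v => G.degree v) t hcompl
          simpa [smul_eq_mul] using this
      _ ≤ ∑ v, G.degree v := Finset.sum_le_sum_of_subset (Finset.subset_univ _)
  have hNm : (N - m) * t ≤ (N - B.card) * t := by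
    apply Nat.mul_le_mul_right
    omega
  calc (N - m) * t ≤ ∑ v, G.degree v := le_trans hNm hsum
    _ = 2 * G.edgeFinset.card := G.sum_degrees_eq_twice_card_edges

set_option maxHeartbeats 1600000 in
/-- **Diffusion-scale optimality forces `ω(N√N)` edges.**
If `dis₂(G_N, ε)/√N → 0` for every `ε > 0`, then `|E(G_N)|/N^{3/2} → ∞`,
i.e. the number of edges of `G_N` is `ω(N·√N)`. -/
theorem edges_superlinear_of_dis2
    (G : (N : ℕ) → SimpleGraph (Fin N)) [∀ N, DecidableRel (G N).Adj]
    (h : ∀ ε : ℝ, 0 < ε →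
      Tendsto (fun N : ℕ => (dis2 (G N) ε : ℝ) / Real.sqrt N) atTop (nhds 0)) :
    Tendsto (fun N : ℕ => ((G N).edgeFinset.card : ℝ) / (N : ℝ) ^ ((3 : ℝ) / 2))
      atTop atTop := by
  rw [tendsto_atTop]
  intro K
  obtain ⟨K', hKK', hK'1⟩ : ∃ K' : ℝ, K ≤ K' ∧ 1 ≤ K' :=
    ⟨max K 1, le_max_left _ _, le_max_right _ _⟩
  have hK'pos : (0 : ℝ) < K' := lt_of_lt_of_le one_pos hK'1
  set ε : ℝ := 1 / (48 * K') with hεdef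
  have hεpos : 0 < ε := by positivity
  have hεK : 48 * ε * K' = 1 := by
    rw [hεdef]; field_simp
  -- eventually `dis2 ≤ ε√N`
  have hev1 : ∀ᶠ N : ℕ in atTop, (dis2 (G N) ε : ℝ) ≤ ε * Real.sqrt N := by
    have h1 := (h ε hεpos).eventually_lt_const hεpos
    filter_upwards [h1, eventually_ge_atTop 1] with N hlt hN1
    have hs : (0 : ℝ) < Real.sqrt N := Real.sqrt_pos.2 (by exact_mod_cast hN1)
    rw [div_lt_iff₀ hs] at hlt
    exact hlt.le
  -- eventually `√N` is large
  obtain ⟨Cv, hC1, hC2⟩ : ∃ Cv : ℝ, 1 / ε ≤ Cv ∧ 6 * ε + 2 ≤ Cv :=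
    ⟨max (1 / ε) (6 * ε + 2), le_max_left _ _, le_max_right _ _⟩
  have hC0 : 0 ≤ Cv := le_trans (by positivity) hC1
  have hev2 : ∀ᶠ N : ℕ in atTop, Cv ≤ Real.sqrt N := by
    filter_upwards [eventually_ge_atTop ⌈Cv ^ 2⌉₊] with N hN
    have h1 : Cv ^ 2 ≤ (N : ℝ) := le_trans (Nat.le_ceil _) (by exact_mod_cast hN)
    exact (Real.le_sqrt hC0 (Nat.cast_nonneg N)).2 h1
  filter_upwards [hev1, hev2, eventually_ge_atTop 1] with N hs hC hN1
  have hNpos : (0 : ℝ) < (N : ℝ) := by exact_mod_cast hN1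
  -- basic facts about A = √N
  set A : ℝ := Real.sqrt N with hAdef
  have hNA : (N : ℝ) = A * A := (Real.mul_self_sqrt (Nat.cast_nonneg N)).symm
  have hpow : (N : ℝ) ^ ((3 : ℝ) / 2) = (N : ℝ) * A := by
    by_cases hN0 : N = 0
    · subst hN0; simp [hAdef, Real.zero_rpow (by norm_num : ((3:ℝ)/2) ≠ 0)]
    have hNpos : (0 : ℝ) < (N : ℝ) := by positivity
    rw [hAdef, Real.sqrt_eq_rpow,
      show ((3 : ℝ) / 2) = 1 + 1 / 2 by norm_num,
      Real.rpow_add hNpos, Real.rpow_one]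
  have hA1 : (1 : ℝ) ≤ ε * A := by
    have h1 : 1 / ε ≤ A := le_trans hC1 hC
    rw [div_le_iff₀ hεpos] at h1
    linarith [mul_comm A ε]
  have hAnn : (0 : ℝ) ≤ A := Real.sqrt_nonneg _
  have hA0 : (0 : ℝ) < A := by nlinarith
  have hA62 : 6 * ε + 2 ≤ A := le_trans hC2 hC
  have hAge1 : (1 : ℝ) ≤ A := by nlinarith
  have h6a2 : 6 * (ε * A) + 2 ≤ (N : ℝ) := by nlinarith
  -- set up s, m, t
  set s : ℕ := dis2 (G N) ε with hsdef
  set m : ℕ := ⌈ε * A⌉₊ with hmdef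
  have hm_lb : ε * A ≤ (m : ℝ) := Nat.le_ceil _
  have hm_ub : (m : ℝ) < ε * A + 1 := Nat.ceil_lt_add_one (by positivity)
  have hm_ub2 : (m : ℝ) ≤ 2 * (ε * A) := by nlinarith
  have hm0 : 0 < m := Nat.ceil_pos.2 (by positivity)
  have hsa : (s : ℝ) ≤ ε * A := hs
  have hsN : s + 1 ≤ N := by
    have : ((s : ℝ) + 1) ≤ (N : ℝ) := by nlinarith
    exact_mod_cast this
  have hmN : m ≤ N := by
    have : (m : ℝ) ≤ (N : ℝ) := by nlinarith
    exact_mod_cast this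
  clear_value m
  obtain ⟨t, ht_le, ht_gt⟩ : ∃ t : ℕ, m * t ≤ N - (s + 1) ∧ N - (s + 1) < m * t + m := by
    refine ⟨(N - (s + 1)) / m, ?_, ?_⟩
    · rw [mul_comm]; exact Nat.div_mul_le_self _ _
    · have h2 := Nat.div_add_mod (N - (s + 1)) m
      have h3 := Nat.mod_lt (N - (s + 1)) hm0
      omega
  have hmt : m * t + s < N := by omega
  have hkey : (N - m) * t ≤ 2 * (G N).edgeFinset.card :=
    key_count (G N) hm_lb hmt
  clear_value s
  clear_value A ε
  -- cast everything to ℝ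
  have ht_lb : (N : ℝ) - s - 1 < (m : ℝ) * t + m := by
    have h4 : ((N - (s + 1) : ℕ) : ℝ) < (m : ℝ) * t + m := by exact_mod_cast ht_gt
    rw [Nat.cast_sub hsN] at h4
    push_cast at h4
    linarith
  have hkeyR : ((N : ℝ) - m) * t ≤ 2 * ((G N).edgeFinset.card : ℝ) := by
    have h4 : (((N - m) * t : ℕ) : ℝ) ≤ ((2 * (G N).edgeFinset.card : ℕ) : ℝ) := by
      exact_mod_cast hkey
    rw [Nat.cast_mul, Nat.cast_sub hmN] at h4
    push_cast at h4
    linarith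
  set E : ℝ := ((G N).edgeFinset.card : ℝ) with hEdef
  have hE0 : (0 : ℝ) ≤ E := Nat.cast_nonneg _
  clear_value E
  have ht0 : (0 : ℝ) ≤ (t : ℝ) := Nat.cast_nonneg _
  -- m * t + m ≥ N/2 hence t ≥ (N/2 - 2εA)/(2εA)
  have hNnn : (0 : ℝ) ≤ (N : ℝ) := Nat.cast_nonneg _
  have hmt_half : (N : ℝ) / 2 ≤ (m : ℝ) * t + m := by linarith
  have ht_lb2 : (N : ℝ) / 2 - 2 * (ε * A) ≤ 2 * (ε * A) * t := by
    have h1 : (m : ℝ) * t ≤ 2 * (ε * A) * t := by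
      have := mul_le_mul_of_nonneg_right hm_ub2 ht0
      linarith
    linarith
  have hNm_half : (N : ℝ) / 2 ≤ (N : ℝ) - m := by linarith
  have hE1 : (N : ℝ) / 2 * t ≤ 2 * E := by
    have h1 := mul_le_mul_of_nonneg_right hNm_half ht0
    linarith
  have hE2 : (N : ℝ) / 2 * ((N : ℝ) / 2 - 2 * (ε * A)) ≤ 2 * (ε * A) * (2 * E) := by
    have h1 := mul_le_mul_of_nonneg_left ht_lb2 (by positivity : (0 : ℝ) ≤ (N : ℝ) / 2)
    have h2 := mul_le_mul_of_nonneg_left hE1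
        (le_of_lt (by positivity : (0 : ℝ) < 2 * (ε * A)))
    nlinarith [h1, h2]
  have hE3 : (N : ℝ) * (N : ℝ) / 12 ≤ 4 * (ε * A) * E := by
    have h1 := mul_le_mul_of_nonneg_left h6a2 hNnn
    nlinarith [h1, hE2]
  -- conclude
  rw [hpow, le_div_iff₀ (mul_pos hNpos hA0)]
  have e1 : A * A * A * A / 12 ≤ 4 * (ε * A) * E := by
    rw [hNA] at hE3; linarith
  have e1' : (A * A * A) * A ≤ (48 * ε * E) * A := by nlinarith [e1]
  have e2 : A * A * A ≤ 48 * ε * E := le_of_mul_le_mul_right e1' hA0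
  have e3 : K' * (A * A * A) ≤ E := by
    calc K' * (A * A * A) ≤ K' * (48 * ε * E) :=
          mul_le_mul_of_nonneg_left e2 hK'pos.le
      _ = (48 * ε * K') * E := by ring
      _ = E := by rw [hεK, one_mul]
  rw [hNA]
  have hA3 : (0 : ℝ) ≤ A * A * A := by positivity
  calc K * (A * A * A) ≤ K' * (A * A * A) := mul_le_mul_of_nonneg_right hKK' hA3
    _ ≤ E := e3
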